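/- Let (W,S) be an even Coxeter system, t ∈ S, and suppose s ∈ S shortens an element w ∈ W by left multiplication, i.e. ℓ(sw) < ℓ(w) with w = s₁⋯s_k reduced. Then the index i provided by the Exchange Condition (so that sw = s₁⋯ŝᵢ⋯s_k) satisfies sᵢ = s. -/

import Mathlib

open CoxeterSystem

/-- An even Coxeter system: every off-diagonal entry of the Coxeter matrix is
even or infinite (where `0` encodes `∞`). -/
def CoxeterMatrix.IsEven {B : Type*} (M : CoxeterMatrix B) : Prop :=
  ∀ i j : B, i ≠ j → M i j = 0 ∨ Even (M i j)

/-- The standard parabolic subgroup `W_V` generated by the simple reflections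
indexed by `V`. -/
def CoxeterSystem.parabolic {B W : Type*} [Group W] {M : CoxeterMatrix B}
    (cs : CoxeterSystem M W) (V : Set B) : Subgroup W :=
  Subgroup.closure (cs.simple '' V)

/-- `V ⊆ S` is spherical if the parabolic subgroup `W_V` is finite. -/
def CoxeterSystem.IsSpherical {B W : Type*} [Group W] {M : CoxeterMatrix B}
    (cs : CoxeterSystem M W) (V : Set B) : Prop :=
  (cs.parabolic V : Set W).Finite

/-- `S(w)`: the set of generators appearing in a reduced expression for `w`. -/
def CoxeterSystem.lettersOf {B W : Type*} [Group W] {M : CoxeterMatrix B}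
    (cs : CoxeterSystem M W) (w : W) : Set B :=
  {i | ∃ ω : List B, cs.IsReduced ω ∧ cs.wordProd ω = w ∧ i ∈ ω}

/-- The nerve of the Coxeter system is a flag complex: any finite set of
pairwise spherical vertices is spherical. -/
def CoxeterSystem.HasFlagNerve {B W : Type*} [Group W] {M : CoxeterMatrix B}
    (cs : CoxeterSystem M W) : Prop :=
  ∀ T : Finset B, (∀ i ∈ T, ∀ j ∈ T, i ≠ j → cs.IsSpherical {i, j}) →
    cs.IsSpherical (T : Set B)

/-- in an even Coxeter system, if `s` shortens `w` then the letter
deleted by the Exchange Condition is `s` itself. -/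
theorem statement2 {B W : Type*} [Group W] {M : CoxeterMatrix B}
    (cs : CoxeterSystem M W) (heven : M.IsEven) (s : B) (ω : List B)
    (hred : cs.IsReduced ω)
    (hshort : cs.length (cs.simple s * cs.wordProd ω) < cs.length (cs.wordProd ω))
    (i : Fin ω.length)
    (hi : cs.simple s * cs.wordProd ω = cs.wordProd (ω.eraseIdx i)) :
    ω.get i = s := by
  classical
  set g : B → ℤˣ := fun b => if b = s then -1 else 1 with hg
  have hsq : ∀ x : ℤˣ, x * x = 1 := Int.units_mul_self
  have hlift : M.IsLiftable g := by
    intro j j'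
    rcases eq_or_ne j j' with rfl | hne
    · rw [M.diagonal j, pow_one, hg]
      dsimp only
      split <;> simp
    · rcases heven j j' hne with h0 | ⟨k, hk⟩
      · rw [h0, pow_zero]
      · rw [hk, pow_add]; exact hsq _
  set φ : W →* ℤˣ := cs.lift ⟨g, hlift⟩ with hφ
  have hφs : ∀ b : B, φ (cs.simple b) = g b := fun b => cs.lift_apply_simple hlift b
  have hφw : ∀ l : List B, φ (cs.wordProd l) = (l.map g).prod := by
    intro l
    rw [wordProd, map_list_prod, List.map_map]
    congr 1
    exact List.map_congr_left fun b _ => hφs b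
  have key := congrArg φ hi
  rw [map_mul, hφs, hφw, hφw] at key
  have hω : ω = ω.take i ++ ω.get i :: ω.drop (i+1) := by
    conv_lhs => rw [← List.take_append_drop i ω]
    congr 1
    exact (List.drop_eq_getElem_cons i.2).symm ▸ rfl
  rw [List.eraseIdx_eq_take_drop_succ] at key
  conv_lhs at key => rw [hω]
  simp only [List.map_append, List.map_cons, List.prod_append, List.prod_cons] at key
  -- key : g s * ((take).prod * (g (ω.get i) * (drop).prod)) = (take).prod * (drop).prod
  have key' : (g s * g (ω.get i)) * (((ω.take i).map g).prod * ((ω.drop (i+1)).map g).prod)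
      = ((ω.take i).map g).prod * ((ω.drop (i+1)).map g).prod := by
    conv_rhs => rw [← key]
    ac_rfl
  have h1 : g s * g (ω.get i) = 1 := mul_eq_right.mp key'
  by_contra hne
  have h2 : g (ω.get i) = 1 := if_neg hne
  have h3 : g s = -1 := if_pos rfl
  rw [h2, h3] at h1
  norm_num at h1
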